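/- In the full-batch limit case, the modified loss for gradient descent with momentum converges (as n → ∞) to Ê(x) = E(x) + ((1+β)h/(4(1-β)²)) ‖∇E(x)‖², up to the overall factor 1/(1-β); i.e., (1-β) Ê_n(x) → E(x) + ((1+β)h/(4(1-β)²))‖∇E(x)‖² pointwise. -/
import Mathlib


open Filter Finset

lemma grad_const_mul {d : ℕ} (c : ℝ) (E : EuclideanSpace ℝ (Fin d) → ℝ)
    (hE : Differentiable ℝ E) (x : EuclideanSpace ℝ (Fin d)) :
    gradient (fun y => c * E y) x = c • gradient E x := by
  unfold gradient
  rw [fderiv_const_mul (hE x) c, map_smul]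

lemma geom_sum_aux (β : ℝ) : ∀ n : ℕ,
    (∑ k ∈ Finset.range n, β ^ (n - k) * (1 - β ^ (k + 1)) ^ 2) * (1 - β)
      = β * (1 - β ^ n) - 2 * n * β ^ (n + 1) * (1 - β) + β ^ (n + 2) * (1 - β ^ n) := by
  intro n
  induction n with
  | zero => simp
  | succ n ih =>
    have hsum : ∑ k ∈ Finset.range (n + 1), β ^ (n + 1 - k) * (1 - β ^ (k + 1)) ^ 2
        = β * ((∑ k ∈ Finset.range n, β ^ (n - k) * (1 - β ^ (k + 1)) ^ 2)
            + (1 - β ^ (n + 1)) ^ 2) := by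
      rw [Finset.sum_range_succ, mul_add, Finset.mul_sum]
      congr 1
      · refine Finset.sum_congr rfl fun k hk => ?_
        have hk' : k < n := Finset.mem_range.mp hk
        have : n + 1 - k = (n - k) + 1 := by omega
        rw [this, pow_succ]
        ring
      · simp [pow_succ]
    rw [hsum]
    push_cast
    linear_combination β * ih

/-- In the full-batch case (`E_k = E`), the rescaled modified loss `(1-β) Ê_n(x)`
converges pointwise, as `n → ∞`, to `E(x) + ((1+β)h/(4(1-β)²)) ‖∇E(x)‖²`. -/
theorem full_batch_modified_loss_limit {d : ℕ} (β h : ℝ)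
    (hβ0 : 0 ≤ β) (hβ1 : β < 1) (hh : 0 < h)
    (E : EuclideanSpace ℝ (Fin d) → ℝ) (hE : Differentiable ℝ E)
    (G : ℕ → EuclideanSpace ℝ (Fin d) → ℝ)
    (hG : ∀ n x, G n x = ((1 - β ^ (n + 1)) / (1 - β)) * E x) :
    ∀ x : EuclideanSpace ℝ (Fin d),
      Tendsto (fun n : ℕ => (1 - β) *
          (G n x + (h / 4) * (‖gradient (G n) x‖ ^ 2 +
            2 * ∑ k ∈ Finset.range n, β ^ (n - k) * ‖gradient (G k) x‖ ^ 2)))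
        atTop
        (nhds (E x + ((1 + β) * h / (4 * (1 - β) ^ 2)) * ‖gradient E x‖ ^ 2)) := by
  intro x
  have hne : (1 : ℝ) - β ≠ 0 := by intro hc; linarith
  set A : ℝ := ‖gradient E x‖ ^ 2 with hA
  -- gradient of G k
  have hgradG : ∀ k : ℕ, ‖gradient (G k) x‖ ^ 2
      = ((1 - β ^ (k + 1)) / (1 - β)) ^ 2 * A := by
    intro k
    have hGk : G k = fun y => ((1 - β ^ (k + 1)) / (1 - β)) * E y := funext (hG k)
    rw [hGk, grad_const_mul _ E hE, norm_smul]
    rw [mul_pow, Real.norm_eq_abs, sq_abs]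
  -- rewrite the sum using the closed form
  have hsumA : ∀ n : ℕ, (∑ k ∈ Finset.range n, β ^ (n - k) * ‖gradient (G k) x‖ ^ 2)
      = ((β * (1 - β ^ n) - 2 * n * β ^ (n + 1) * (1 - β) + β ^ (n + 2) * (1 - β ^ n))
          / (1 - β) ^ 3) * A := by
    intro n
    have h1 := geom_sum_aux β n
    calc (∑ k ∈ Finset.range n, β ^ (n - k) * ‖gradient (G k) x‖ ^ 2)
        = (∑ k ∈ Finset.range n, β ^ (n - k) * (1 - β ^ (k + 1)) ^ 2) * (A / (1 - β) ^ 2) := by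
          rw [Finset.sum_mul]
          refine Finset.sum_congr rfl fun k _ => ?_
          rw [hgradG k, div_pow]
          ring
      _ = ((β * (1 - β ^ n) - 2 * n * β ^ (n + 1) * (1 - β) + β ^ (n + 2) * (1 - β ^ n))
            / (1 - β) ^ 3) * A := by
          rw [div_mul_eq_mul_div, mul_div_assoc', eq_div_iff (pow_ne_zero 3 hne),
            div_mul_eq_mul_div, div_eq_iff (pow_ne_zero 2 hne)]
          linear_combination (A * (1 - β) ^ 2) * h1
  -- express the sequence as a function of β^n and n β^n
  have heq : ∀ n : ℕ, (1 - β) *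
      (G n x + (h / 4) * (‖gradient (G n) x‖ ^ 2 +
        2 * ∑ k ∈ Finset.range n, β ^ (n - k) * ‖gradient (G k) x‖ ^ 2))
      = (1 - β) * (((1 - β * β ^ n) / (1 - β)) * E x
          + (h / 4) * (((1 - β * β ^ n) / (1 - β)) ^ 2 * A
            + 2 * (((β * (1 - β ^ n) - 2 * ((n : ℝ) * β ^ n) * β * (1 - β)
                + β ^ 2 * β ^ n * (1 - β ^ n)) / (1 - β) ^ 3) * A))) := by
    intro n
    rw [hG n x, hgradG n, hsumA n]
    ring_nf
  -- limits
  have hb : Tendsto (fun n : ℕ => β ^ n) atTop (nhds 0) :=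
    tendsto_pow_atTop_nhds_zero_of_lt_one hβ0 hβ1
  have hm : Tendsto (fun n : ℕ => (n : ℝ) * β ^ n) atTop (nhds 0) :=
    tendsto_self_mul_const_pow_of_lt_one hβ0 hβ1
  have hmain : Tendsto (fun n : ℕ => (1 - β) * (((1 - β * β ^ n) / (1 - β)) * E x
          + (h / 4) * (((1 - β * β ^ n) / (1 - β)) ^ 2 * A
            + 2 * (((β * (1 - β ^ n) - 2 * ((n : ℝ) * β ^ n) * β * (1 - β)
                + β ^ 2 * β ^ n * (1 - β ^ n)) / (1 - β) ^ 3) * A)))) atTop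
      (nhds ((1 - β) * (((1 - β * 0) / (1 - β)) * E x
          + (h / 4) * (((1 - β * 0) / (1 - β)) ^ 2 * A
            + 2 * (((β * (1 - (0:ℝ)) - 2 * (0:ℝ) * β * (1 - β)
                + β ^ 2 * 0 * (1 - (0:ℝ))) / (1 - β) ^ 3) * A))))) := by
    apply Tendsto.const_mul
    apply Tendsto.add
    · exact (((tendsto_const_nhds.sub (hb.const_mul β)).div_const _).mul_const _)
    · apply Tendsto.const_mul
      apply Tendsto.add
      · exact ((((tendsto_const_nhds.sub (hb.const_mul β)).div_const _).pow 2).mul_const _)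
      · apply Tendsto.const_mul
        apply Tendsto.mul_const
        apply Tendsto.div_const
        apply Tendsto.add
        · exact ((tendsto_const_nhds.sub hb).const_mul β).sub
            (((hm.const_mul 2).mul_const β).mul_const (1 - β))
        · exact ((hb.const_mul _).mul (tendsto_const_nhds.sub hb))
  have hval : (1 - β) * (((1 - β * 0) / (1 - β)) * E x
          + (h / 4) * (((1 - β * 0) / (1 - β)) ^ 2 * A
            + 2 * (((β * (1 - (0:ℝ)) - 2 * (0:ℝ) * β * (1 - β)
                + β ^ 2 * 0 * (1 - (0:ℝ))) / (1 - β) ^ 3) * A)))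
      = E x + ((1 + β) * h / (4 * (1 - β) ^ 2)) * A := by
    field_simp
    ring
  rw [← hval]
  exact hmain.congr (fun n => (heq n).symm)
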